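/- Let a, b ∈ ℝ³ be linearly independent vectors and let z₁, z₂ ∈ ℝ³ satisfy a · z₁ = 0, b · z₂ = 0, and a · z₂ + b · z₁ = 0. Then there exists a unique y ∈ ℝ³ such that y × a = z₁ and y × b = z₂. -/

import Mathlib

open Matrix

lemma bac_cab (u v w : Fin 3 → ℝ) :
    u ⨯₃ (v ⨯₃ w) = (u ⬝ᵥ w) • v - (u ⬝ᵥ v) • w := by
  simp_rw [cross_apply, vec3_dotProduct]
  funext i; fin_cases i <;> simp <;> ring

lemma expand3 (a b v : Fin 3 → ℝ) :
    ((a ⨯₃ b) ⬝ᵥ (a ⨯₃ b)) • v =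
      (v ⬝ᵥ a) • (b ⨯₃ (a ⨯₃ b)) + (v ⬝ᵥ b) • ((a ⨯₃ b) ⨯₃ a) + (v ⬝ᵥ (a ⨯₃ b)) • (a ⨯₃ b) := by
  simp_rw [cross_apply, vec3_dotProduct]
  funext i; fin_cases i <;> simp <;> ring

lemma smul_cross (c : ℝ) (u v : Fin 3 → ℝ) : (c • u) ⨯₃ v = c • (u ⨯₃ v) := by
  rw [LinearMap.map_smul₂]

lemma add_cross (u v w : Fin 3 → ℝ) : (u + v) ⨯₃ w = u ⨯₃ w + v ⨯₃ w := by
  rw [LinearMap.map_add₂]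

lemma cross_comm' (u v : Fin 3 → ℝ) : u ⨯₃ v = -(v ⨯₃ u) := by
  rw [cross_anticomm]

/-- Pointwise Darboux rotation-field theorem: if `a, b` are linearly independent and
`a · z₁ = 0`, `b · z₂ = 0`, `a · z₂ + b · z₁ = 0`, then there is a unique `y` with
`y × a = z₁` and `y × b = z₂`. -/
theorem exists_unique_rotation_vector (a b z₁ z₂ : Fin 3 → ℝ)
    (hab : LinearIndependent ℝ ![a, b])
    (h₁ : a ⬝ᵥ z₁ = 0) (h₂ : b ⬝ᵥ z₂ = 0) (h₃ : a ⬝ᵥ z₂ + b ⬝ᵥ z₁ = 0) :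
    ∃! y : Fin 3 → ℝ, y ⨯₃ a = z₁ ∧ y ⨯₃ b = z₂ := by
  have hpair : ∀ s t : ℝ, s • a + t • b = 0 → s = 0 ∧ t = 0 :=
    LinearIndependent.pair_iff.1 hab
  have ha : a ≠ 0 := by simpa using hab.ne_zero 0
  have hb : b ≠ 0 := by simpa using hab.ne_zero 1
  set n : Fin 3 → ℝ := a ⨯₃ b with hn_def
  have hn : n ≠ 0 := by
    intro h
    have h0 : a ⨯₃ (a ⨯₃ b) = 0 := by rw [← hn_def, h, map_zero]
    rw [bac_cab] at h0
    have : (a ⬝ᵥ b) • a + (-(a ⬝ᵥ a)) • b = 0 := by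
      rw [neg_smul, ← sub_eq_add_neg]; exact h0
    have := (hpair _ _ this).2
    exact ha (dotProduct_self_eq_zero.1 (by linarith))
  set N : ℝ := n ⬝ᵥ n with hN_def
  have hN : N ≠ 0 := fun h => hn (dotProduct_self_eq_zero.1 h)
  set A : ℝ := a ⬝ᵥ a with hA_def
  set B : ℝ := a ⬝ᵥ b with hB_def
  set C : ℝ := b ⬝ᵥ b with hC_def
  have hLag : N = A * C - B * B := by
    rw [hN_def, hn_def, cross_dot_cross, ← hA_def, ← hC_def, ← hB_def, dotProduct_comm b a,
      ← hB_def]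
  set p : ℝ := z₁ ⬝ᵥ n with hp_def
  set q : ℝ := z₂ ⬝ᵥ n with hq_def
  set r : ℝ := b ⬝ᵥ z₁ with hr_def
  -- perpendicularity facts
  have han : a ⬝ᵥ n = 0 := dot_self_cross a b
  have hbn : b ⬝ᵥ n = 0 := dot_cross_self a b
  -- BAC-CAB consequences
  have C1 : (b ⨯₃ n) ⨯₃ a = B • n := by
    rw [cross_comm' (b ⨯₃ n) a, bac_cab, han, zero_smul, zero_sub, neg_neg, ← hB_def]
  have C2 : (n ⨯₃ a) ⨯₃ a = (-A) • n := by
    rw [cross_comm' (n ⨯₃ a) a, bac_cab, han, zero_smul, sub_zero, ← hA_def, ← neg_smul]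
  have C3 : (b ⨯₃ n) ⨯₃ b = C • n := by
    rw [cross_comm' (b ⨯₃ n) b, bac_cab, hbn, zero_smul, zero_sub, neg_neg, ← hC_def]
  have C4 : (n ⨯₃ a) ⨯₃ b = (-B) • n := by
    rw [cross_comm' (n ⨯₃ a) b, bac_cab, hbn, zero_smul, sub_zero, dotProduct_comm b a,
      ← hB_def, ← neg_smul]
  -- expansions of z₁ and z₂
  have E1 : N • z₁ = r • (n ⨯₃ a) + p • n := by
    have := expand3 a b z₁
    rw [← hn_def, ← hN_def, ← hp_def, dotProduct_comm z₁ a, h₁, zero_smul, zero_add,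
      dotProduct_comm z₁ b, ← hr_def] at this
    exact this
  have E2 : N • z₂ = (-r) • (b ⨯₃ n) + q • n := by
    have := expand3 a b z₂
    rw [← hn_def, ← hN_def, ← hq_def, dotProduct_comm z₂ a, dotProduct_comm z₂ b, h₂,
      zero_smul, add_zero] at this
    have haz : a ⬝ᵥ z₂ = -r := by rw [hr_def]; linarith
    rw [haz] at this
    exact this
  -- candidate
  set y : Fin 3 → ℝ :=
    (N⁻¹ * (N⁻¹ * (A * q - B * p))) • (b ⨯₃ n) + (N⁻¹ * (N⁻¹ * (B * q - C * p))) • (n ⨯₃ a)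
      + (N⁻¹ * r) • n with hy_def
  have key1 : y ⨯₃ a = z₁ := by
    apply smul_right_injective (Fin 3 → ℝ) hN
    rw [hy_def]
    simp only [add_cross, smul_cross, C1, C2, E1]
    match_scalars <;> field_simp <;> ring_nf
    rw [hLag]; ring
  have key2 : y ⨯₃ b = z₂ := by
    apply smul_right_injective (Fin 3 → ℝ) hN
    rw [hy_def]
    simp only [add_cross, smul_cross, C3, C4, E2, cross_comm' n b]
    match_scalars <;> field_simp <;> ring_nf
    rw [hLag]; ring
  refine ⟨y, ⟨key1, key2⟩, ?_⟩
  rintro y' ⟨k1, k2⟩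
  -- uniqueness
  have da : (y' - y) ⨯₃ a = 0 := by rw [map_sub, LinearMap.sub_apply, k1, key1, sub_self]
  have db : (y' - y) ⨯₃ b = 0 := by rw [map_sub, LinearMap.sub_apply, k2, key2, sub_self]
  set d : Fin 3 → ℝ := y' - y with hd_def
  have h1 : a ⨯₃ (d ⨯₃ a) = 0 := by rw [da, map_zero]
  have h2 : b ⨯₃ (d ⨯₃ b) = 0 := by rw [db, map_zero]
  rw [bac_cab, sub_eq_zero] at h1 h2
  -- d = ((a⬝d)/A) • a = ((b⬝d)/C) • b
  have hA0 : A ≠ 0 := fun h => ha (dotProduct_self_eq_zero.1 h)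
  have hC0 : C ≠ 0 := fun h => hb (dotProduct_self_eq_zero.1 h)
  have hda : d = (A⁻¹ * (a ⬝ᵥ d)) • a := by
    rw [← smul_smul, ← h1, smul_smul, inv_mul_cancel₀ hA0, one_smul]
  have hdb : d = (C⁻¹ * (b ⬝ᵥ d)) • b := by
    rw [← smul_smul, ← h2, smul_smul, inv_mul_cancel₀ hC0, one_smul]
  have hz : (A⁻¹ * (a ⬝ᵥ d)) • a + (-(C⁻¹ * (b ⬝ᵥ d))) • b = 0 := by
    rw [neg_smul, ← hda, ← hdb, add_neg_cancel]
  have := (hpair _ _ hz).1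
  have hd0 : d = 0 := by rw [hda, this, zero_smul]
  have : y' - y = 0 := hd0
  linear_combination (norm := abel) this
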